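/- Let (A, Con, |~) be an abstract nonmonotonic system and B = (B, Con*, Δ) the canonical default structure constructed from it. Then every extension in B of a finite consistent set P ∈ Con is of the form Q̃ ∪ {[Q]} for some Q ∈ Con with Q ⊆ P ⊆ Q̃. -/

import Mathlib

/-- A set is consistent if every finite subset of it lies in Con. -/
def IsCons {α : Type*} (Con : Set α → Prop) (S : Set α) : Prop :=
  ∀ X : Set α, X ⊆ S → X.Finite → Con X

/-- With trivial entailment: φ(x, S, 0) = x and
φ(x, S, i+1) = φ(x, S, i) ∪ {a | (X, a) ∈ Δ, X ⊆ φ(x, S, i), {a} ∪ S consistent}. -/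
def phiT {α : Type*} (Con : Set α → Prop) (Δ : Set (Set α × α)) (x S : Set α) :
    ℕ → Set α
  | 0 => x
  | i + 1 =>
      phiT Con Δ x S i ∪
        {a | ∃ X : Set α, (X, a) ∈ Δ ∧ X ⊆ phiT Con Δ x S i ∧ IsCons Con ({a} ∪ S)}

/-- Φ(x, S) = ⋃_{i≥0} φ(x, S, i). -/
def PhiT {α : Type*} (Con : Set α → Prop) (Δ : Set (Set α × α)) (x S : Set α) : Set α :=
  ⋃ i, phiT Con Δ x S i

/-- A consistent set y is an extension of x (x ε y) if Φ(x, y) = y. -/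
def ExtT {α : Type*} (Con : Set α → Prop) (Δ : Set (Set α × α)) (x y : Set α) : Prop :=
  IsCons Con y ∧ PhiT Con Δ x y = y

/-- X̃ := {t ∈ A | X |~ {t}}. -/
def Tilde {α : Type*} (snake : Set α → Set α → Prop) (X : Set α) : Set α :=
  {t | snake X {t}}

/-- The token set of the canonical default structure: tokens of A (`Sum.inl a`) together
with a fresh token [X] (`Sum.inr X`) for each X ∈ Con. -/
abbrev Tok (α : Type*) := α ⊕ Set α

/-- Δ := {(X, [X]) | X ∈ Con} ∪ {({[X]}, a) | X ∈ Con, X |~ {a}, a ∉ X}. -/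
def DeltaCan {α : Type*} (Con : Set α → Prop) (snake : Set α → Set α → Prop) :
    Set (Set (Tok α) × Tok α) :=
  {p | ∃ X : Set α, Con X ∧ p = (Sum.inl '' X, Sum.inr X)} ∪
  {p | ∃ (X : Set α) (a : α), Con X ∧ snake X {a} ∧ a ∉ X ∧
        p = ({Sum.inr X}, Sum.inl a)}

/-- A finite W ⊆ B lies in Con* iff (1) W ∩ A ∈ Con, (2) W contains at most one token of
the form [X], and (3) if [X] ∈ W then W \ {[X]} ⊆ A and X |~ (W \ {[X]}). -/
def ConStar {α : Type*} (Con : Set α → Prop) (snake : Set α → Set α → Prop)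
    (W : Set (Tok α)) : Prop :=
  W.Finite ∧
  Con (Sum.inl ⁻¹' W) ∧
  (∀ X Y : Set α, Sum.inr X ∈ W → Sum.inr Y ∈ W → X = Y) ∧
  (∀ X : Set α, Sum.inr X ∈ W →
    (∀ t ∈ W, t ≠ Sum.inr X → ∃ a : α, t = Sum.inl a) ∧
    snake X (Sum.inl ⁻¹' W))


/-- Pointwise singleton derivability of a finite set implies derivability of the set. -/
lemma snake_of_pointwise {α : Type*} (Con : Set α → Prop)
    (snake : Set α → Set α → Prop)
    (h4 : ∀ X Y : Set α, Y ⊆ X → Con X → snake X Y)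
    (h6 : ∀ X Y Z : Set α, snake X Y → snake X Z → snake X (Y ∪ Z))
    (Q : Set α) (hQ : Con Q) :
    ∀ F : Set α, F.Finite → (∀ t ∈ F, snake Q {t}) → snake Q F := by
  intro F hF
  refine Set.Finite.induction_on F hF ?_ ?_
  · intro _
    exact h4 Q ∅ (Set.empty_subset _) hQ
  · intro a s _ _ ih h
    rw [Set.insert_eq]
    exact h6 Q {a} s (h a (Set.mem_insert _ _))
      (ih fun t ht => h t (Set.mem_insert_of_mem _ ht))

/-- every extension in B of a finite consistent set P ∈ Con has the form
Q̃ ∪ {[Q]} for some Q ∈ Con with Q ⊆ P ⊆ Q̃. -/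
theorem canonical_extension_form {α : Type*} (Con : Set α → Prop)
    (snake : Set α → Set α → Prop)
    -- Con is a collection of finite subsets of A
    (hCfin : ∀ X : Set α, Con X → X.Finite)
    -- |~ is a relation between members of Con
    (hSnakeCon : ∀ X Y : Set α, snake X Y → Con X ∧ Con Y)
    (h1 : ∀ X Y : Set α, X ⊆ Y → Con Y → Con X)
    (h2 : ∀ a : α, Con {a})
    (h3 : ∀ X T : Set α, snake X T → Con (X ∪ T))
    (h4 : ∀ X Y : Set α, Y ⊆ X → Con X → snake X Y)
    (h5 : ∀ X T Y : Set α, snake X T → snake (X ∪ T) Y → snake X Y)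
    (h6 : ∀ X Y Z : Set α, snake X Y → snake X Z → snake X (Y ∪ Z)) :
    ∀ P : Set α, Con P →
      ∀ W : Set (Tok α),
        ExtT (ConStar Con snake) (DeltaCan Con snake) (Sum.inl '' P) W →
        ∃ Q : Set α, Con Q ∧ Q ⊆ P ∧ P ⊆ Tilde snake Q ∧
          W = Sum.inl '' Tilde snake Q ∪ {Sum.inr Q} := by
  intro P hP W hExt
  obtain ⟨hWcons, hWeq⟩ := hExt
  set CS := ConStar Con snake with hCS
  set Δc := DeltaCan Con snake with hΔc
  -- each stage is contained in W
  have hphi : ∀ i, phiT CS Δc (Sum.inl '' P) W i ⊆ W := by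
    intro i
    calc phiT CS Δc (Sum.inl '' P) W i ⊆ PhiT CS Δc (Sum.inl '' P) W :=
          Set.subset_iUnion _ i
      _ = W := hWeq
  have hxW : Sum.inl '' P ⊆ W := hphi 0
  -- the uniqueness of inr tokens in W
  have huniq : ∀ X Y : Set α, Sum.inr X ∈ W → Sum.inr Y ∈ W → X = Y := by
    intro X Y hX hY
    have hsub : ({Sum.inr X, Sum.inr Y} : Set (Tok α)) ⊆ W := by
      intro t ht; rcases ht with rfl | ht
      · exact hX
      · rw [Set.mem_singleton_iff] at ht; subst ht; exact hY
    have := hWcons _ hsub ((Set.finite_singleton _).insert _)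
    exact this.2.2.1 X Y (Set.mem_insert _ _) (Set.mem_insert_of_mem _ rfl)
  -- characterization of members of W
  have char : ∀ i, ∀ t ∈ phiT CS Δc (Sum.inl '' P) W i,
      (∃ a ∈ P, t = Sum.inl a) ∨
      (∃ X, Con X ∧ t = Sum.inr X ∧ Sum.inl '' X ⊆ W) ∨
      (∃ X a, Sum.inr X ∈ W ∧ snake X {a} ∧ a ∉ X ∧ t = Sum.inl a) := by
    intro i
    induction i with
    | zero =>
        intro t ht
        obtain ⟨a, ha, rfl⟩ := ht
        exact Or.inl ⟨a, ha, rfl⟩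
    | succ i ih =>
        intro t ht
        rcases ht with ht | ht
        · exact ih t ht
        · obtain ⟨X, hΔ, hsub, _⟩ := ht
          rcases hΔ with ⟨Y, hY, hpair⟩ | ⟨Y, a, hY, hsn, hna, hpair⟩
          · obtain ⟨hX, hT⟩ := Prod.mk.injEq _ _ _ _ ▸ hpair
            refine Or.inr (Or.inl ⟨Y, hY, ?_, ?_⟩)
            · simpa using congrArg Prod.snd hpair
            · have hX : X = Sum.inl '' Y := congrArg Prod.fst hpair
              exact fun u hu => hphi i (hsub (hX ▸ hu))
          · have hX : X = {Sum.inr Y} := congrArg Prod.fst hpair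
            have ht' : t = Sum.inl a := congrArg Prod.snd hpair
            refine Or.inr (Or.inr ⟨Y, a, ?_, hsn, hna, ht'⟩)
            exact hphi i (hsub (hX ▸ rfl))
  have charW : ∀ t ∈ W,
      (∃ a ∈ P, t = Sum.inl a) ∨
      (∃ X, Con X ∧ t = Sum.inr X ∧ Sum.inl '' X ⊆ W) ∨
      (∃ X a, Sum.inr X ∈ W ∧ snake X {a} ∧ a ∉ X ∧ t = Sum.inl a) := by
    intro t ht
    rw [← hWeq] at ht
    obtain ⟨i, hi⟩ := Set.mem_iUnion.1 ht
    exact char i t hi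
  -- Step A: W contains some inr token
  have hexQ : ∃ Q : Set α, Sum.inr Q ∈ W := by
    by_contra hno
    push_neg at hno
    -- then every member of W is inl of some element of P
    have hWP : ∀ t ∈ W, ∃ a ∈ P, t = Sum.inl a := by
      intro t ht
      rcases charW t ht with h | ⟨X, _, rfl, _⟩ | ⟨X, a, hX, _⟩
      · exact h
      · exact absurd ht (hno X)
      · exact absurd hX (hno X)
    -- {inr P} ∪ W is consistent
    have hcons : IsCons CS ({Sum.inr P} ∪ W) := by
      intro V hV hVfin
      have hVP : ∀ t ∈ V, t ≠ Sum.inr P → ∃ a ∈ P, t = Sum.inl a := by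
        intro t ht htne
        rcases hV ht with ht' | ht'
        · exact absurd ht' htne
        · exact hWP t ht'
      have hpre : Sum.inl ⁻¹' V ⊆ P := by
        intro a ha
        obtain ⟨b, hb, hba⟩ := hVP _ ha (by simp)
        injection hba with h
        exact h ▸ hb
      refine ⟨hVfin, h1 _ _ hpre hP, ?_, ?_⟩
      · intro X Y hX hY
        have eX : X = P := by
          rcases hV hX with h | h
          · simpa [Sum.inr.injEq] using h
          · obtain ⟨a, _, ha⟩ := hWP _ h; simp at ha
        have eY : Y = P := by
          rcases hV hY with h | h
          · simpa [Sum.inr.injEq] using h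
          · obtain ⟨a, _, ha⟩ := hWP _ h; simp at ha
        rw [eX, eY]
      · intro X hX
        have eX : X = P := by
          rcases hV hX with h | h
          · simpa [Sum.inr.injEq] using h
          · obtain ⟨a, _, ha⟩ := hWP _ h; simp at ha
        subst eX
        refine ⟨?_, h4 _ _ hpre hP⟩
        intro t ht htne
        obtain ⟨a, _, ha⟩ := hVP t ht htne
        exact ⟨a, ha⟩
    -- hence inr P ∈ φ 1 ⊆ W
    have hmem : Sum.inr P ∈ phiT CS Δc (Sum.inl '' P) W 1 := by
      refine Or.inr ⟨Sum.inl '' P, ?_, le_refl _, hcons⟩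
      exact Or.inl ⟨P, hP, rfl⟩
    exact hno P (hphi 1 hmem)
  obtain ⟨Q, hQW⟩ := hexQ
  -- basic facts about Q
  have hQfacts : Con Q ∧ Sum.inl '' Q ⊆ W := by
    rcases charW _ hQW with ⟨a, _, ha⟩ | ⟨X, hX, hXeq, hXsub⟩ | ⟨X, a, _, _, _, ha⟩
    · exact absurd ha (by simp)
    · have : X = Q := by simpa [Sum.inr.injEq] using hXeq.symm
      exact this ▸ ⟨hX, hXsub⟩
    · exact absurd ha (by simp)
  obtain ⟨hQcon, hQsub⟩ := hQfacts
  -- characterization of inl tokens of W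
  have hinl : ∀ a : α, Sum.inl a ∈ W → a ∈ P ∨ (snake Q {a} ∧ a ∉ Q) := by
    intro a ha
    rcases charW _ ha with ⟨b, hb, hba⟩ | ⟨X, _, hXeq, _⟩ | ⟨X, b, hXW, hsn, hbn, hba⟩
    · left; injection hba with h; exact h ▸ hb
    · exact absurd hXeq (by simp)
    · have hXQ : X = Q := huniq X Q hXW hQW
      have hab : a = b := Sum.inl.inj hba
      right; subst hXQ; subst hab; exact ⟨hsn, hbn⟩
  -- Q ⊆ P
  have hQP : Q ⊆ P := by
    intro a ha
    rcases hinl a (hQsub ⟨a, ha, rfl⟩) with h | ⟨_, hn⟩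
    · exact h
    · exact absurd ha hn
  -- P ⊆ Tilde Q
  have hPQ : ∀ a ∈ P, snake Q {a} := by
    intro a ha
    have hsub : ({Sum.inr Q, Sum.inl a} : Set (Tok α)) ⊆ W := by
      intro t ht; rcases ht with rfl | ht
      · exact hQW
      · rw [Set.mem_singleton_iff] at ht; subst ht; exact hxW ⟨a, ha, rfl⟩
    have hcs := hWcons _ hsub ((Set.finite_singleton _).insert _)
    have := (hcs.2.2.2 Q (Set.mem_insert _ _)).2
    have hpre : Sum.inl ⁻¹' ({Sum.inr Q, Sum.inl a} : Set (Tok α)) = {a} := by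
      ext b; simp [Sum.inl.injEq, eq_comm]
    rwa [hpre] at this
  -- every inl token of W is in Tilde Q
  have hWtilde : ∀ a : α, Sum.inl a ∈ W → snake Q {a} := by
    intro a ha
    rcases hinl a ha with h | ⟨h, _⟩
    · exact hPQ a h
    · exact h
  -- Step G: every a with snake Q {a} has inl a ∈ W
  have hback : ∀ a : α, snake Q {a} → Sum.inl a ∈ W := by
    intro a hsn
    by_cases haQ : a ∈ Q
    · exact hxW ⟨a, hQP haQ, rfl⟩
    · -- consistency of {inl a} ∪ W
      have hcons : IsCons CS ({Sum.inl a} ∪ W) := by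
        intro V hV hVfin
        have hpretilde : ∀ b : α, Sum.inl b ∈ V → snake Q {b} := by
          intro b hb
          rcases hV hb with hb' | hb'
          · rw [Set.mem_singleton_iff] at hb'
            injection hb' with h; exact h ▸ hsn
          · exact hWtilde b hb'
        have hprefin : (Sum.inl ⁻¹' V).Finite :=
          hVfin.preimage (Set.injOn_of_injective Sum.inl_injective)
        have hsnV : snake Q (Sum.inl ⁻¹' V) :=
          snake_of_pointwise Con snake h4 h6 Q hQcon _ hprefin
            (fun t ht => hpretilde t ht)
        have hconV : Con (Sum.inl ⁻¹' V) :=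
          h1 _ _ Set.subset_union_right (h3 _ _ hsnV)
        have hrQ : ∀ X : Set α, Sum.inr X ∈ V → X = Q := by
          intro X hX
          rcases hV hX with h | h
          · exact absurd h (by simp)
          · exact huniq X Q h hQW
        refine ⟨hVfin, hconV, ?_, ?_⟩
        · intro X Y hX hY; rw [hrQ X hX, hrQ Y hY]
        · intro X hX
          have := hrQ X hX; subst this
          refine ⟨?_, hsnV⟩
          intro t ht htne
          match t with
          | Sum.inl b => exact ⟨b, rfl⟩
          | Sum.inr Y => exact absurd (hrQ Y ht) (by simpa [Sum.inr.injEq] using htne)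
      -- inr Q ∈ φ i for some i
      have : Sum.inr Q ∈ PhiT CS Δc (Sum.inl '' P) W := by rw [hWeq]; exact hQW
      obtain ⟨i, hi⟩ := Set.mem_iUnion.1 this
      have hmem : Sum.inl a ∈ phiT CS Δc (Sum.inl '' P) W (i + 1) := by
        refine Or.inr ⟨{Sum.inr Q}, ?_, ?_, hcons⟩
        · exact Or.inr ⟨Q, a, hQcon, hsn, haQ, rfl⟩
        · intro t ht; rw [Set.mem_singleton_iff] at ht; exact ht ▸ hi
      exact hphi (i + 1) hmem
  refine ⟨Q, hQcon, hQP, fun a ha => hPQ a ha, ?_⟩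
  ext t
  constructor
  · intro ht
    match t with
    | Sum.inl a => exact Or.inl ⟨a, hWtilde a ht, rfl⟩
    | Sum.inr X =>
        exact Or.inr (by simp [huniq X Q ht hQW])
  · intro ht
    rcases ht with ⟨a, ha, rfl⟩ | ht
    · exact hback a ha
    · rw [Set.mem_singleton_iff] at ht; exact ht ▸ hQW
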